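/- With k_max, k_min the extremal eigenvalues of s-column Gram submatrices of A, k_min/k_max ≥ min_{h≠l} c_hh/c_ll − 2(s−1)·max_i ν(i), where ν(i) = max_{j≠i}|c_ij|/c_ii. -/

import Mathlib

open Matrix

theorem Matrix.isHermitian_transpose_mul_self {m n α : Type*} [Fintype m]
    [NonUnitalCommSemiring α] [StarRing α] [TrivialStar α] (A : Matrix m n α) :
    (Aᵀ * A).IsHermitian := by
  rw [IsHermitian, conjTranspose_mul, conjTranspose_eq_transpose_of_trivial,
    conjTranspose_eq_transpose_of_trivial, transpose_transpose]

lemma herm_eig_gersh {ι : Type*} [Fintype ι] [DecidableEq ι] (B : Matrix ι ι ℝ)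
    (hB : B.IsHermitian) (μ : ℝ) (hμ : μ ∈ Set.range hB.eigenvalues) :
    ∃ p, |μ - B p p| ≤ ∑ j ∈ Finset.univ.erase p, |B p j| := by
  obtain ⟨i, rfl⟩ := hμ
  have hv := hB.mulVec_eigenvectorBasis i
  have hvne : (⇑(hB.eigenvectorBasis i) : ι → ℝ) ≠ 0 := by
    intro h
    have := hB.eigenvectorBasis.orthonormal.ne_zero i
    apply this
    ext j
    exact congrFun h j
  have hev : Module.End.HasEigenvalue (Matrix.toLin' B) (hB.eigenvalues i) := by
    apply Module.End.hasEigenvalue_of_hasEigenvector (x := (⇑(hB.eigenvectorBasis i) : ι → ℝ))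
    refine ⟨Module.End.mem_eigenspace_iff.2 ?_, hvne⟩
    rw [Matrix.toLin'_apply, hv]
  obtain ⟨p, hp⟩ := eigenvalue_mem_ball hev
  refine ⟨p, ?_⟩
  rw [Metric.mem_closedBall, Real.dist_eq] at hp
  simpa [Real.norm_eq_abs] using hp

set_option maxHeartbeats 1000000 in
/-- Theorem 2: `k_min / k_max ≥ min_{h≠l} c_hh/c_ll − 2(s−1)·max_i ν(i)`. -/
theorem stmt_12 {n m s : ℕ} (hm : 1 < m) (hs : 1 ≤ s) (hsm : s ≤ m)
    (A : Matrix (Fin n) (Fin m) ℝ)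
    (hcols : ∀ i, (fun k => A k i) ≠ 0)
    (C : Matrix (Fin m) (Fin m) ℝ) (hC : C = Aᵀ * A)
    (lmax lmin : Finset (Fin m) → ℝ)
    (hlmax : ∀ T : Finset (Fin m), T.Nonempty →
      IsGreatest (Set.range
        (isHermitian_transpose_mul_self
          (A.submatrix id (fun i : {j // j ∈ T} => i.1))).eigenvalues) (lmax T))
    (hlmin : ∀ T : Finset (Fin m), T.Nonempty →
      IsLeast (Set.range
        (isHermitian_transpose_mul_self
          (A.submatrix id (fun i : {j // j ∈ T} => i.1))).eigenvalues) (lmin T))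
    (kmax kmin : ℝ)
    (hkmax : IsGreatest {r : ℝ | ∃ T : Finset (Fin m), T.card = s ∧ r = lmax T} kmax)
    (hkmin : IsLeast {r : ℝ | ∃ T : Finset (Fin m), T.card = s ∧ r = lmin T} kmin)
    (hkpos : 0 < kmin) (hkk : kmin ≤ kmax)
    (ν : Fin m → ℝ)
    (hν_ub : ∀ i, ∀ j ≠ i, |C i j| / C i i ≤ ν i)
    (hν_mem : ∀ i, ∃ j ≠ i, ν i = |C i j| / C i i)
    (νmax : ℝ) (hνmax : IsGreatest (Set.range ν) νmax)
    (r : ℝ)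
    (hr : IsLeast {q : ℝ | ∃ h l : Fin m, h ≠ l ∧ q = C h h / C l l} r) :
    r - 2 * ((s : ℝ) - 1) * νmax ≤ kmin / kmax := by
  have hkmaxpos : 0 < kmax := lt_of_lt_of_le hkpos hkk
  -- positivity of diagonal
  have hCpos : ∀ i, 0 < C i i := by
    intro i
    have hsum : C i i = ∑ k, A k i * A k i := by
      simp [hC, Matrix.mul_apply, Matrix.transpose_apply]
    rw [hsum]
    obtain ⟨k, hk⟩ := Function.ne_iff.1 (hcols i)
    exact Finset.sum_pos' (fun k _ => mul_self_nonneg _)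
      ⟨k, Finset.mem_univ k, mul_self_pos.2 hk⟩
  have hν0 : ∀ i, 0 ≤ ν i := by
    intro i
    obtain ⟨j, _, hje⟩ := hν_mem i
    rw [hje]
    exact div_nonneg (abs_nonneg _) (hCpos i).le
  have hνmax0 : 0 ≤ νmax := by
    obtain ⟨i, hi⟩ := hνmax.1
    exact hi ▸ hν0 i
  set t : ℝ := ((s : ℝ) - 1) * νmax with htdef
  have hs1 : (1 : ℝ) ≤ (s : ℝ) := by exact_mod_cast hs
  have ht0 : 0 ≤ t := mul_nonneg (by linarith) hνmax0
  -- Gershgorin bound for all eigenvalues of s-column Gram submatrices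
  have hbound : ∀ T : Finset (Fin m), T.card = s →
      ∀ μ ∈ Set.range ((isHermitian_transpose_mul_self
        (A.submatrix id (fun i : {j // j ∈ T} => i.1))).eigenvalues),
      ∃ i : Fin m, |μ - C i i| ≤ t * C i i := by
    intro T hT μ hμ
    obtain ⟨p, hp⟩ := herm_eig_gersh _ _ μ hμ
    refine ⟨p.1, ?_⟩
    have hM : ∀ q : {j // j ∈ T},
        ((A.submatrix id (fun i : {j // j ∈ T} => i.1))ᵀ *
          (A.submatrix id (fun i : {j // j ∈ T} => i.1))) p q = C p.1 q.1 := by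
      intro q
      simp [hC, Matrix.mul_apply, Matrix.conjTranspose_apply, Matrix.transpose_apply,
        Matrix.submatrix_apply]
    rw [hM p] at hp
    refine hp.trans ?_
    have hterm : ∀ q ∈ Finset.univ.erase p,
        |((A.submatrix id (fun i : {j // j ∈ T} => i.1))ᵀ *
          (A.submatrix id (fun i : {j // j ∈ T} => i.1))) p q| ≤ νmax * C p.1 p.1 := by
      intro q hq
      rw [hM q]
      have hqp : q.1 ≠ p.1 := fun h =>
        (Finset.mem_erase.1 hq).1 (Subtype.ext h)
      have h1 : |C p.1 q.1| / C p.1 p.1 ≤ ν p.1 := hν_ub p.1 q.1 hqp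
      have h2 : |C p.1 q.1| ≤ ν p.1 * C p.1 p.1 :=
        (div_le_iff₀ (hCpos p.1)).1 h1
      have h3 : ν p.1 ≤ νmax := hνmax.2 ⟨p.1, rfl⟩
      nlinarith [hCpos p.1]
    calc ∑ j ∈ Finset.univ.erase p, |((A.submatrix id (fun i : {j // j ∈ T} => i.1))ᵀ *
          (A.submatrix id (fun i : {j // j ∈ T} => i.1))) p j|
        ≤ (Finset.univ.erase p).card • (νmax * C p.1 p.1) :=
          Finset.sum_le_card_nsmul _ _ _ hterm
      _ = ((s - 1 : ℕ) : ℝ) * (νmax * C p.1 p.1) := by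
          rw [Finset.card_erase_of_mem (Finset.mem_univ p), Finset.card_univ,
            Fintype.card_coe, hT, nsmul_eq_mul]
      _ = t * C p.1 p.1 := by
          rw [Nat.cast_sub hs, htdef]
          push_cast
          ring
  -- apply to the extremizing sets
  obtain ⟨T0, hT0card, hT0⟩ := hkmin.1
  obtain ⟨T1, hT1card, hT1⟩ := hkmax.1
  have hT0ne : T0.Nonempty := Finset.card_pos.1 (by omega)
  have hT1ne : T1.Nonempty := Finset.card_pos.1 (by omega)
  obtain ⟨h, hh⟩ := hbound T0 hT0card kmin (hT0 ▸ (hlmin T0 hT0ne).1)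
  obtain ⟨l, hl⟩ := hbound T1 hT1card kmax (hT1 ▸ (hlmax T1 hT1ne).1)
  set a : ℝ := C h h with hadef
  set b : ℝ := C l l with hbdef
  have ha : 0 < a := hCpos h
  have hb : 0 < b := hCpos l
  have h1 : a - t * a ≤ kmin := by
    have := abs_le.1 hh
    linarith [this.2]
  have h2 : kmax ≤ b + t * b := by
    have := abs_le.1 hl
    linarith [this.1]
  -- r ≤ 1
  have hr1 : r ≤ 1 := by
    have hne01 : (⟨0, by omega⟩ : Fin m) ≠ ⟨1, hm⟩ := by
      intro hcontra
      exact absurd (congrArg Fin.val hcontra) (by simp)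
    have q01 := hr.2 ⟨⟨0, by omega⟩, ⟨1, hm⟩, hne01, rfl⟩
    have q10 := hr.2 ⟨⟨1, hm⟩, ⟨0, by omega⟩, hne01.symm, rfl⟩
    rcases le_total (C ⟨0, by omega⟩ ⟨0, by omega⟩) (C ⟨1, hm⟩ ⟨1, hm⟩) with hle | hle
    · exact q01.trans ((div_le_one (hCpos _)).2 hle)
    · exact q10.trans ((div_le_one (hCpos _)).2 hle)
  rcases le_or_gt 1 t with hcase | hcase
  · -- trivial case: t ≥ 1
    have : 0 < kmin / kmax := div_pos hkpos hkmaxpos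
    have : r - 2 * ((s : ℝ) - 1) * νmax = r - 2 * t := by rw [htdef]; ring
    rw [this]
    linarith [div_pos hkpos hkmaxpos]
  · -- main case: t < 1
    set x : ℝ := min (a / b) 1 with hxdef
    have hx1 : x ≤ 1 := min_le_right _ _
    have hxab : x ≤ a / b := min_le_left _ _
    have hx0 : 0 ≤ x := le_min (div_nonneg ha.le hb.le) zero_le_one
    have hrx : r ≤ x := by
      by_cases heq : h = l
      · have : a / b = 1 := by rw [hadef, hbdef, heq, div_self (hCpos l).ne']
        rw [hxdef, this, min_self]
        exact hr1
      · exact le_min (hr.2 ⟨h, l, heq, rfl⟩) hr1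
    have c1 : x - 2 * t ≤ x * (1 - 2 * t) := by nlinarith
    have c2 : x * (1 - 2 * t) ≤ x * ((1 - t) / (1 + t)) := by
      have hden : (0 : ℝ) < 1 + t := by linarith
      have : (1 - 2 * t) ≤ (1 - t) / (1 + t) := by
        rw [le_div_iff₀ hden]
        nlinarith
      exact mul_le_mul_of_nonneg_left this hx0
    have c3 : x * ((1 - t) / (1 + t)) ≤ (a / b) * ((1 - t) / (1 + t)) :=
      mul_le_mul_of_nonneg_right hxab
        (div_nonneg (by linarith) (by linarith))
    have c4 : (a / b) * ((1 - t) / (1 + t)) = (a * (1 - t)) / (b * (1 + t)) :=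
      div_mul_div_comm a b (1 - t) (1 + t)
    have c5 : (a * (1 - t)) / (b * (1 + t)) ≤ kmin / kmax := by
      apply div_le_div₀ hkpos.le (by nlinarith) hkmaxpos (by nlinarith)
    have : r - 2 * ((s : ℝ) - 1) * νmax = r - 2 * t := by rw [htdef]; ring
    rw [this]
    linarith
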